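/- Assume f is convex, L-Lipschitz and β-smooth, P is a gossip matrix with spectral bound λ ∈ [0, 1), and the stepsize is constant, η_t = η for all t, with 0 < η ≤ 2/β. Then for every z ∈ 𝒵, |f(w̄^{T+1}; z) − f(v̄^{T+1}; z)| ≤ 4η²βL²T/(1−λ) + (2ηL²/m) ∑_{t=1}^T 𝟙[j_t(r)=k]. -/

import Mathlib

open scoped RealInnerProductSpace

lemma descent_lemma {H : Type*} [NormedAddCommGroup H] [InnerProductSpace ℝ H]
    (f : H → ℝ) (g : H → H) (β : ℝ) (hβ : 0 < β)
    (hdiff : ∀ x, HasFDerivAt f ((innerSL ℝ) (g x)) x)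
    (hsmooth : ∀ x y, ‖g x - g y‖ ≤ β * ‖x - y‖) (x y : H) :
    f y ≤ f x + ⟪g x, y - x⟫ + β / 2 * ‖y - x‖ ^ 2 := by
  set d := y - x with hd
  set φ : ℝ → ℝ := fun t => f (x + t • d) - t * ⟪g x, d⟫ - β / 2 * t ^ 2 * ‖d‖ ^ 2 with hφ
  have hline : ∀ t : ℝ, HasDerivAt (fun s : ℝ => x + s • d) d t := by
    intro t
    simpa using ((hasDerivAt_id t).smul_const d).const_add x
  have hder : ∀ t : ℝ, HasDerivAt φ
      (⟪g (x + t • d), d⟫ - ⟪g x, d⟫ - β * t * ‖d‖ ^ 2) t := by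
    intro t
    have h1 : HasDerivAt (fun s : ℝ => f (x + s • d)) (⟪g (x + t • d), d⟫) t := by
      simpa [Function.comp_def] using (hdiff (x + t • d)).comp_hasDerivAt t (hline t)
    have h2 : HasDerivAt (fun s : ℝ => s * ⟪g x, d⟫) (⟪g x, d⟫) t := by
      simpa using (hasDerivAt_id t).mul_const (⟪g x, d⟫)
    have h3 : HasDerivAt (fun s : ℝ => β / 2 * s ^ 2 * ‖d‖ ^ 2) (β * t * ‖d‖ ^ 2) t := by
      have : HasDerivAt (fun s : ℝ => s ^ 2) (2 * t) t := by
        simpa using hasDerivAt_pow 2 t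
      have := (this.const_mul (β / 2)).mul_const (‖d‖ ^ 2)
      rw [show β * t * ‖d‖ ^ 2 = β / 2 * (2 * t) * ‖d‖ ^ 2 by ring]
      exact this
    exact (h1.sub h2).sub h3
  have hanti : AntitoneOn φ (Set.Icc 0 1) := by
    apply antitoneOn_of_deriv_nonpos (convex_Icc 0 1)
    · exact fun t _ => ((hder t).continuousAt).continuousWithinAt
    · intro t ht
      exact (hder t).differentiableAt.differentiableWithinAt
    · intro t ht
      rw [interior_Icc] at ht
      rw [(hder t).deriv]
      have h1 : ⟪g (x + t • d), d⟫ - ⟪g x, d⟫ = ⟪g (x + t • d) - g x, d⟫ := by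
        rw [inner_sub_left]
      have h2 : ⟪g (x + t • d) - g x, d⟫ ≤ β * t * ‖d‖ ^ 2 := by
        calc ⟪g (x + t • d) - g x, d⟫ ≤ ‖g (x + t • d) - g x‖ * ‖d‖ := real_inner_le_norm _ _
          _ ≤ β * ‖(x + t • d) - x‖ * ‖d‖ := by
              have := hsmooth (x + t • d) x
              nlinarith [norm_nonneg d, norm_nonneg (g (x + t • d) - g x)]
          _ = β * t * ‖d‖ ^ 2 := by
              rw [add_sub_cancel_left, norm_smul, Real.norm_eq_abs, abs_of_pos ht.1]
              ring
      linarith [h1 ▸ h2]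
  have h01 := hanti (Set.left_mem_Icc.2 zero_le_one) (Set.right_mem_Icc.2 zero_le_one) zero_le_one
  simp only [hφ] at h01
  have e0 : x + (0:ℝ) • d = x := by simp
  have e1 : x + (1:ℝ) • d = y := by simp [hd]
  rw [e0, e1] at h01
  simp at h01
  linarith

lemma convex_first_order {H : Type*} [NormedAddCommGroup H] [InnerProductSpace ℝ H]
    (f : H → ℝ) (g : H → H)
    (hconv : ConvexOn ℝ Set.univ f)
    (hdiff : ∀ x, HasFDerivAt f ((innerSL ℝ) (g x)) x) (x y : H) :
    f x + ⟪g x, y - x⟫ ≤ f y := by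
  set d := y - x with hd
  have hline : HasDerivAt (fun s : ℝ => x + s • d) d 0 := by
    simpa using ((hasDerivAt_id (0:ℝ)).smul_const d).const_add x
  have hφ : HasDerivAt (fun s : ℝ => f (x + s • d)) (⟪g x, d⟫) 0 := by
    have h0 : x + (0:ℝ) • d = x := by simp
    have := (hdiff (x + (0:ℝ) • d)).comp_hasDerivAt 0 hline
    rw [h0] at this
    simpa [Function.comp_def] using this
  rw [hasDerivAt_iff_tendsto_slope] at hφ
  have hmono : Filter.Tendsto (slope (fun s : ℝ => f (x + s • d)) 0) (nhdsWithin 0 (Set.Ioi 0)) (nhds ⟪g x, d⟫) :=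
    hφ.mono_left (nhdsWithin_mono 0 (fun t ht => ne_of_gt ht))
  have hle : ⟪g x, d⟫ ≤ f y - f x := by
    refine le_of_tendsto hmono ?_
    filter_upwards [Ioc_mem_nhdsGT_of_mem (Set.left_mem_Ico.2 zero_lt_one)] with t ht
    have ht0 : 0 < t := ht.1
    have ht1 : t ≤ 1 := ht.2
    have hcomb := hconv.2 (Set.mem_univ x) (Set.mem_univ y) (by linarith : (0:ℝ) ≤ 1 - t) ht0.le (by ring)
    have hpt : (1 - t) • x + t • y = x + t • d := by
      rw [hd]; module
    rw [hpt] at hcomb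
    rw [slope_def_field]
    have : (f (x + t • d) - f (x + (0:ℝ) • d)) / (t - 0) ≤ f y - f x := by
      simp only [zero_smul, add_zero, sub_zero]
      rw [div_le_iff₀ ht0]
      simp only [smul_eq_mul] at hcomb
      nlinarith
    simpa using this
  have : ⟪g x, d⟫ ≤ f y - f x := hle
  linarith

lemma strong_lb {H : Type*} [NormedAddCommGroup H] [InnerProductSpace ℝ H]
    (f : H → ℝ) (g : H → H) (β : ℝ) (hβ : 0 < β)
    (hconv : ConvexOn ℝ Set.univ f)
    (hdiff : ∀ x, HasFDerivAt f ((innerSL ℝ) (g x)) x)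
    (hsmooth : ∀ x y, ‖g x - g y‖ ≤ β * ‖x - y‖) (x y : H) :
    f x + ⟪g x, y - x⟫ + 1 / (2 * β) * ‖g y - g x‖ ^ 2 ≤ f y := by
  set c := g x with hc
  set h : H → ℝ := fun w => f w - ⟪c, w⟫ with hh
  set gh : H → H := fun w => g w - c with hgh
  have hconvh : ConvexOn ℝ Set.univ h := by
    refine ⟨convex_univ, fun a _ b _ s t hs ht hst => ?_⟩
    have h1 := hconv.2 (Set.mem_univ a) (Set.mem_univ b) hs ht hst
    simp only [smul_eq_mul] at h1
    simp only [hh, smul_eq_mul, inner_add_right, real_inner_smul_right]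
    linarith
  have hdiffh : ∀ w, HasFDerivAt h ((innerSL ℝ) (gh w)) w := by
    intro w
    have hlin : HasFDerivAt (fun w : H => ⟪c, w⟫) (innerSL ℝ c) w :=
      (innerSL ℝ c).hasFDerivAt
    have := (hdiff w).sub hlin
    have heq : (innerSL ℝ) (gh w) = (innerSL ℝ) (g w) - (innerSL ℝ) c := by
      rw [hgh]; simp [map_sub]
    rw [heq]; exact this
  have hsmoothh : ∀ a b, ‖gh a - gh b‖ ≤ β * ‖a - b‖ := by
    intro a b; simpa [hgh, sub_sub_sub_cancel_right] using hsmooth a b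
  have hmin : h x ≤ h (y - β⁻¹ • gh y) := by
    have := convex_first_order h gh hconvh hdiffh x (y - β⁻¹ • gh y)
    have hz : gh x = 0 := by simp [hgh, hc]
    rw [hz] at this
    simpa using this
  have hdesc := descent_lemma h gh β hβ hdiffh hsmoothh y (y - β⁻¹ • gh y)
  have hsub : (y - β⁻¹ • gh y) - y = -(β⁻¹ • gh y) := by abel
  rw [hsub] at hdesc
  have e1 : ⟪gh y, -(β⁻¹ • gh y)⟫ = -(β⁻¹ * ‖gh y‖ ^ 2) := by
    rw [inner_neg_right, real_inner_smul_right, real_inner_self_eq_norm_sq]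
  have e2 : ‖-(β⁻¹ • gh y)‖ ^ 2 = β⁻¹ ^ 2 * ‖gh y‖ ^ 2 := by
    rw [norm_neg, norm_smul, Real.norm_eq_abs, abs_of_pos (inv_pos.2 hβ), mul_pow]
  rw [e1, e2] at hdesc
  have key : h x ≤ h y - 1 / (2 * β) * ‖gh y‖ ^ 2 := by
    have hβ' : β ≠ 0 := ne_of_gt hβ
    calc h x ≤ h (y - β⁻¹ • gh y) := hmin
      _ ≤ h y + -(β⁻¹ * ‖gh y‖ ^ 2) + β / 2 * (β⁻¹ ^ 2 * ‖gh y‖ ^ 2) := hdesc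
      _ = h y - 1 / (2 * β) * ‖gh y‖ ^ 2 := by field_simp; ring
  simp only [hh, hgh, hc] at key
  have : ⟪g x, y⟫ - ⟪g x, x⟫ = ⟪g x, y - x⟫ := by rw [inner_sub_right]
  linarith

lemma cocoercive {H : Type*} [NormedAddCommGroup H] [InnerProductSpace ℝ H]
    (f : H → ℝ) (g : H → H) (β : ℝ) (hβ : 0 < β)
    (hconv : ConvexOn ℝ Set.univ f)
    (hdiff : ∀ x, HasFDerivAt f ((innerSL ℝ) (g x)) x)
    (hsmooth : ∀ x y, ‖g x - g y‖ ≤ β * ‖x - y‖) (x y : H) :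
    β⁻¹ * ‖g x - g y‖ ^ 2 ≤ ⟪g x - g y, x - y⟫ := by
  have h1 := strong_lb f g β hβ hconv hdiff hsmooth x y
  have h2 := strong_lb f g β hβ hconv hdiff hsmooth y x
  have e1 : ⟪g x - g y, x - y⟫ = ⟪g x, x - y⟫ - ⟪g y, x - y⟫ := inner_sub_left _ _ _
  have e2 : ⟪g x, y - x⟫ = -⟪g x, x - y⟫ := by
    rw [show y - x = -(x - y) by abel, inner_neg_right]
  have e3 : ‖g y - g x‖ = ‖g x - g y‖ := norm_sub_rev _ _
  rw [e2, e3] at h1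
  have hsum : 1 / (2 * β) * ‖g x - g y‖ ^ 2 + 1 / (2 * β) * ‖g x - g y‖ ^ 2
      = β⁻¹ * ‖g x - g y‖ ^ 2 := by
    field_simp; ring
  linarith

lemma consensus_bound {H : Type*} [NormedAddCommGroup H] [InnerProductSpace ℝ H]
    (m T : ℕ) (hm : 1 ≤ m)
    (P : Fin m → Fin m → ℝ)
    (hPsym : ∀ i l, P i l = P l i)
    (hProw : ∀ i, ∑ l, P i l = 1)
    (lam : ℝ) (hlam0 : 0 ≤ lam) (hlam1 : lam < 1)
    (hspec : ∀ vv : Fin m → H, ∑ i, vv i = 0 →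
      Real.sqrt (∑ i, ‖∑ l, P i l • vv l‖ ^ 2) ≤ lam * Real.sqrt (∑ i, ‖vv i‖ ^ 2))
    (η L : ℝ) (hη0 : 0 < η) (hL : 0 < L)
    (G : ℕ → Fin m → H) (hG : ∀ t i, ‖G t i‖ ≤ L)
    (w₀ : H) (x : ℕ → Fin m → H) (hx1 : ∀ i, x 1 i = w₀)
    (hrec : ∀ t, 1 ≤ t → t ≤ T → ∀ i,
      x (t + 1) i = ∑ l, P i l • x t l - η • G t i) :
    ∀ t, 1 ≤ t → t ≤ T + 1 →
      ∑ i, ‖x t i - (m : ℝ)⁻¹ • ∑ l, x t l‖ ≤ 2 * η * L * m / (1 - lam) := by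
  have hm0 : (0:ℝ) < m := by exact_mod_cast hm
  have hm0' : (m:ℝ) ≠ 0 := ne_of_gt hm0
  set u : ℕ → Fin m → H := fun t i => x t i - (m : ℝ)⁻¹ • ∑ l, x t l with hu
  -- sum of deviations is zero
  have husum : ∀ t, ∑ i, u t i = 0 := by
    intro t
    simp only [hu]
    rw [Finset.sum_sub_distrib, Finset.sum_const, Finset.card_univ, Fintype.card_fin]
    rw [← Nat.cast_smul_eq_nsmul ℝ, smul_smul, mul_inv_cancel₀ hm0', one_smul, sub_self]
  -- key recursion for u
  have hucol : ∀ p : Fin m, ∑ l, P l p = 1 := fun p => by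
    rw [show ∑ l, P l p = ∑ l, P p l from Finset.sum_congr rfl fun l _ => (hPsym l p), hProw]
  have huavg : ∀ t, 1 ≤ t → t ≤ T →
      (m:ℝ)⁻¹ • ∑ l, x (t+1) l = (m:ℝ)⁻¹ • ∑ l, x t l - ((m:ℝ)⁻¹ * η) • ∑ l, G t l := by
    intro t ht1 ht2
    have : ∑ l, x (t+1) l = ∑ l, x t l - η • ∑ l, G t l := by
      rw [Finset.sum_congr rfl fun i _ => hrec t ht1 ht2 i]
      rw [Finset.sum_sub_distrib, Finset.sum_comm, ← Finset.smul_sum]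
      congr 1
      rw [Finset.sum_congr rfl fun p _ => (Finset.sum_smul ..).symm]
      exact Finset.sum_congr rfl fun p _ => by rw [hucol p, one_smul]
    rw [this, smul_sub, smul_smul]
  have hurec : ∀ t, 1 ≤ t → t ≤ T → ∀ i,
      u (t+1) i = (∑ l, P i l • u t l) - η • (G t i - (m:ℝ)⁻¹ • ∑ l, G t l) := by
    intro t ht1 ht2 i
    have e1 : ∑ l, P i l • u t l = (∑ l, P i l • x t l) - (m:ℝ)⁻¹ • ∑ l, x t l := by
      simp only [hu, smul_sub]
      rw [Finset.sum_sub_distrib]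
      congr 1
      rw [← Finset.sum_smul, hProw, one_smul]
    simp only [hu]
    rw [hrec t ht1 ht2 i, huavg t ht1 ht2, e1]
    module
  -- norm of averaged gradient
  have hGavg : ∀ t, ‖(m:ℝ)⁻¹ • ∑ l, G t l‖ ≤ L := by
    intro t
    rw [norm_smul, Real.norm_eq_abs, abs_of_pos (inv_pos.2 hm0)]
    calc (m:ℝ)⁻¹ * ‖∑ l, G t l‖ ≤ (m:ℝ)⁻¹ * (m * L) := by
          apply mul_le_mul_of_nonneg_left _ (inv_pos.2 hm0).le
          calc ‖∑ l, G t l‖ ≤ ∑ l, ‖G t l‖ := norm_sum_le _ _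
            _ ≤ ∑ _l : Fin m, L := Finset.sum_le_sum fun l _ => hG t l
            _ = m * L := by rw [Finset.sum_const, Finset.card_univ, Fintype.card_fin, nsmul_eq_mul]
      _ = L := by field_simp
  -- ψ bound by induction
  set C : ℝ := 2 * η * L * Real.sqrt m / (1 - lam) with hC
  have h1lam : (0:ℝ) < 1 - lam := by linarith
  have hsqm : (0:ℝ) < Real.sqrt m := Real.sqrt_pos.2 hm0
  have hψ : ∀ t, 1 ≤ t → t ≤ T + 1 → Real.sqrt (∑ i, ‖u t i‖ ^ 2) ≤ C := by
    intro t ht1'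
    induction t, ht1' using Nat.le_induction with
    | base =>
      intro _
      have : ∀ i, u 1 i = 0 := by
        intro i
        simp only [hu, hx1]
        rw [Finset.sum_const, Finset.card_univ, Fintype.card_fin,
          ← Nat.cast_smul_eq_nsmul ℝ m, smul_smul, inv_mul_cancel₀ hm0', one_smul, sub_self]
      simp only [this]
      simp
      positivity
    | succ t ht1 ih =>
      intro ht2
      have htT : t ≤ T := by omega
      have ihv := ih (by omega)
      -- PiLp setup
      set E := PiLp 2 (fun _ : Fin m => H) with hE
      set a : E := WithLp.toLp 2 (fun i => ∑ l, P i l • u t l) with ha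
      set b : E := WithLp.toLp 2 (fun i => η • (G t i - (m:ℝ)⁻¹ • ∑ l, G t l)) with hb
      have hab : Real.sqrt (∑ i, ‖u (t+1) i‖ ^ 2) = ‖a - b‖ := by
        rw [PiLp.norm_eq_of_L2]
        congr 1
        refine Finset.sum_congr rfl fun i _ => ?_
        rw [hurec t ht1 htT i]
        rfl
      have hna : ‖a‖ ≤ lam * Real.sqrt (∑ i, ‖u t i‖ ^ 2) := by
        rw [PiLp.norm_eq_of_L2]
        exact hspec (u t) (husum t)
      have hnb : ‖b‖ ≤ 2 * η * L * Real.sqrt m := by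
        rw [PiLp.norm_eq_of_L2]
        have hbd : ∀ i : Fin m, ‖b i‖ ^ 2 ≤ (2 * η * L) ^ 2 := by
          intro i
          have h1 : ‖b i‖ ≤ 2 * η * L := by
            show ‖η • (G t i - (m:ℝ)⁻¹ • ∑ l, G t l)‖ ≤ 2 * η * L
            rw [norm_smul, Real.norm_eq_abs, abs_of_pos hη0]
            have := norm_sub_le (G t i) ((m:ℝ)⁻¹ • ∑ l, G t l)
            nlinarith [hG t i, hGavg t]
          have h0 : (0:ℝ) ≤ ‖b i‖ := norm_nonneg _
          nlinarith
        calc Real.sqrt (∑ i, ‖b i‖ ^ 2) ≤ Real.sqrt (∑ _i : Fin m, (2 * η * L) ^ 2) :=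
              Real.sqrt_le_sqrt (Finset.sum_le_sum fun i _ => hbd i)
          _ = 2 * η * L * Real.sqrt m := by
              rw [Finset.sum_const, Finset.card_univ, Fintype.card_fin, nsmul_eq_mul]
              rw [Real.sqrt_mul (by positivity), Real.sqrt_sq (by positivity)]
              ring
      rw [hab]
      calc ‖a - b‖ ≤ ‖a‖ + ‖b‖ := norm_sub_le _ _
        _ ≤ lam * Real.sqrt (∑ i, ‖u t i‖ ^ 2) + 2 * η * L * Real.sqrt m := by
            gcongr
        _ ≤ lam * C + 2 * η * L * Real.sqrt m := by
            have : 0 ≤ lam := hlam0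
            gcongr
        _ = C := by
            rw [hC]; field_simp; ring
  -- from sqrt-sum-of-squares to sum of norms
  intro t ht1 ht2
  have hψt := hψ t ht1 ht2
  have hCS : (∑ i, ‖u t i‖) ^ 2 ≤ m * ∑ i, ‖u t i‖ ^ 2 := by
    have := sq_sum_le_card_mul_sum_sq (s := (Finset.univ : Finset (Fin m))) (f := fun i => ‖u t i‖)
    simpa using this
  have hsum : ∑ i, ‖u t i‖ ≤ Real.sqrt m * Real.sqrt (∑ i, ‖u t i‖ ^ 2) := by
    have h0 : (0:ℝ) ≤ ∑ i, ‖u t i‖ := Finset.sum_nonneg fun i _ => norm_nonneg _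
    rw [← Real.sqrt_sq h0, ← Real.sqrt_mul (by positivity)]
    exact Real.sqrt_le_sqrt hCS
  calc ∑ i, ‖u t i‖ ≤ Real.sqrt m * Real.sqrt (∑ i, ‖u t i‖ ^ 2) := hsum
    _ ≤ Real.sqrt m * C := by gcongr
    _ = 2 * η * L * m / (1 - lam) := by
        rw [hC, mul_div_assoc']
        congr 1
        have h := Real.mul_self_sqrt hm0.le
        linear_combination (2 * η * L) * h

lemma avg_step {H : Type*} [NormedAddCommGroup H] [InnerProductSpace ℝ H]
    (m : ℕ) (P : Fin m → Fin m → ℝ)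
    (hPsym : ∀ i l, P i l = P l i)
    (hProw : ∀ i, ∑ l, P i l = 1)
    (η : ℝ) (x x' g : Fin m → H)
    (h : ∀ i, x' i = ∑ l, P i l • x l - η • g i) :
    (m:ℝ)⁻¹ • ∑ l, x' l = (m:ℝ)⁻¹ • ∑ l, x l - ((m:ℝ)⁻¹ * η) • ∑ l, g l := by
  have hucol : ∀ p : Fin m, ∑ l, P l p = 1 := fun p => by
    rw [show ∑ l, P l p = ∑ l, P p l from Finset.sum_congr rfl fun l _ => (hPsym l p), hProw]
  have : ∑ l, x' l = ∑ l, x l - η • ∑ l, g l := by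
    rw [Finset.sum_congr rfl fun i _ => h i]
    rw [Finset.sum_sub_distrib, Finset.sum_comm, ← Finset.smul_sum]
    congr 1
    rw [Finset.sum_congr rfl fun p _ => (Finset.sum_smul ..).symm]
    exact Finset.sum_congr rfl fun p _ => by rw [hucol p, one_smul]
  rw [this, smul_sub, smul_smul]

set_option maxHeartbeats 1000000 in
/-- convex case, constant stepsize `0 < η ≤ 2/β`. -/
theorem dsgd_stability_convex_constant_step
    {H : Type*} [NormedAddCommGroup H] [InnerProductSpace ℝ H]
    {Z : Type*} (f : Z → H → ℝ) (f' : Z → H → H)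
    (L β : ℝ) (hL : 0 < L) (hβ : 0 < β)
    (hdiff : ∀ (z : Z) (x : H), HasFDerivAt (f z) ((innerSL ℝ) (f' z x)) x)
    (hlip : ∀ (z : Z) (x y : H), |f z x - f z y| ≤ L * ‖x - y‖)
    (hgradbd : ∀ (z : Z) (x : H), ‖f' z x‖ ≤ L)
    (hsmooth : ∀ (z : Z) (x y : H), ‖f' z x - f' z y‖ ≤ β * ‖x - y‖)
    (hconv : ∀ z : Z, ConvexOn ℝ Set.univ (f z))
    (m n T : ℕ) (hm : 1 ≤ m) (hn : 1 ≤ n) (hT : 1 ≤ T)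
    (P : Fin m → Fin m → ℝ)
    (hPsym : ∀ i l, P i l = P l i)
    (hPpos : ∀ i l, 0 ≤ P i l)
    (hProw : ∀ i, ∑ l, P i l = 1)
    (lam : ℝ) (hlam0 : 0 ≤ lam) (hlam1 : lam < 1)
    (hspec : ∀ vv : Fin m → H, ∑ i, vv i = 0 →
      Real.sqrt (∑ i, ‖∑ l, P i l • vv l‖ ^ 2) ≤ lam * Real.sqrt (∑ i, ‖vv i‖ ^ 2))
    (r : Fin m) (k : Fin n)
    (S S' : Fin m → Fin n → Z)
    (hSS' : ∀ (r' : Fin m) (k' : Fin n), (r', k') ≠ (r, k) → S' r' k' = S r' k')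
    (j : ℕ → Fin m → Fin n)
    (η : ℝ) (hη0 : 0 < η) (hηβ : η ≤ 2 / β)
    (w₀ : H) (w v : ℕ → Fin m → H)
    (hw1 : ∀ i, w 1 i = w₀) (hv1 : ∀ i, v 1 i = w₀)
    (hwrec : ∀ t, 1 ≤ t → t ≤ T → ∀ i,
      w (t + 1) i = ∑ l, P i l • w t l - η • f' (S i (j t i)) (w t i))
    (hvrec : ∀ t, 1 ≤ t → t ≤ T → ∀ i,
      v (t + 1) i = ∑ l, P i l • v t l - η • f' (S' i (j t i)) (v t i))
    :
    ∀ z : Z,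
      |f z ((m : ℝ)⁻¹ • ∑ i, w (T + 1) i) - f z ((m : ℝ)⁻¹ • ∑ i, v (T + 1) i)| ≤
        4 * η ^ 2 * β * L ^ 2 * T / (1 - lam)
          + 2 * η * L ^ 2 / m * ∑ t ∈ Finset.Icc 1 T, (if j t r = k then (1 : ℝ) else 0) := by
  intro z
  have hm0 : (0:ℝ) < m := by exact_mod_cast hm
  have hm0' : (m:ℝ) ≠ 0 := ne_of_gt hm0
  have h1lam : (0:ℝ) < 1 - lam := by linarith
  set wb : ℕ → H := fun t => (m:ℝ)⁻¹ • ∑ i, w t i with hwb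
  set vb : ℕ → H := fun t => (m:ℝ)⁻¹ • ∑ i, v t i with hvb
  set Gw : ℕ → Fin m → H := fun t i => f' (S i (j t i)) (w t i) with hGw
  set Gv : ℕ → Fin m → H := fun t i => f' (S' i (j t i)) (v t i) with hGv
  have hconsW := consensus_bound m T hm P hPsym hProw lam hlam0 hlam1 hspec η L hη0 hL
    Gw (fun t i => hgradbd _ _) w₀ w hw1 hwrec
  have hconsV := consensus_bound m T hm P hPsym hProw lam hlam0 hlam1 hspec η L hη0 hL
    Gv (fun t i => hgradbd _ _) w₀ v hv1 hvrec
  set ind : ℕ → ℝ := fun t => if j t r = k then (1:ℝ) else 0 with hind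
  set bnd : ℕ → ℝ := fun t => 4*η^2*β*L/(1-lam) + 2*η*L/m * ind t with hbnd
  have hc0 : (0:ℝ) < (m:ℝ)⁻¹ * η := by positivity
  have hηβ' : η * β ≤ 2 := by
    rw [div_eq_mul_inv] at hηβ
    calc η * β ≤ (2 * β⁻¹) * β := mul_le_mul_of_nonneg_right hηβ hβ.le
      _ = 2 := by field_simp
  have hmain : ∀ t, 1 ≤ t → t ≤ T + 1 →
      ‖wb t - vb t‖ ≤ ∑ s ∈ Finset.Icc 1 (t-1), bnd s := by
    intro t ht1'
    induction t, ht1' using Nat.le_induction with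
    | base =>
      intro _
      have he : ∀ i : Fin m, w 1 i = v 1 i := fun i => by rw [hw1, hv1]
      have : wb 1 = vb 1 := by
        simp only [hwb, hvb]
        rw [Finset.sum_congr rfl fun i _ => he i]
      simp [this]
    | succ t ht1 ih =>
      intro ht2
      have htT : t ≤ T := by omega
      have ihv := ih (by omega)
      set δ : H := wb t - vb t with hδ
      set A : Fin m → H := fun i => f' (S i (j t i)) (wb t) - f' (S i (j t i)) (vb t) with hA
      set E : Fin m → H := fun i => (Gw t i - Gv t i) - A i with hE
      have hstep : wb (t+1) - vb (t+1) =
          (δ - ((m:ℝ)⁻¹ * η) • ∑ i, A i) - ((m:ℝ)⁻¹ * η) • ∑ i, E i := by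
        have h1 := avg_step m P hPsym hProw η (w t) (w (t+1)) (Gw t) (hwrec t ht1 htT)
        have h2 := avg_step m P hPsym hProw η (v t) (v (t+1)) (Gv t) (hvrec t ht1 htT)
        have key : ∑ i, Gw t i = ∑ i, Gv t i + (∑ i, A i + ∑ i, E i) := by
          rw [← Finset.sum_add_distrib, ← Finset.sum_add_distrib]
          refine Finset.sum_congr rfl fun i _ => ?_
          simp only [hE]
          abel
        show (m:ℝ)⁻¹ • ∑ i, w (t+1) i - (m:ℝ)⁻¹ • ∑ i, v (t+1) i = _
        rw [h1, h2, key, hδ]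
        simp only [hwb, hvb]
        module
      -- co-coercivity / nonexpansiveness
      have hAco : ∀ i : Fin m, β⁻¹ * ‖A i‖^2 ≤ ⟪A i, δ⟫ := fun i =>
        cocoercive (f (S i (j t i))) (f' (S i (j t i))) β hβ (hconv _) (hdiff _)
          (hsmooth _) (wb t) (vb t)
      have hsumco : β⁻¹ * ∑ i, ‖A i‖^2 ≤ ⟪∑ i, A i, δ⟫ := by
        rw [sum_inner, Finset.mul_sum]
        exact Finset.sum_le_sum fun i _ => hAco i
      have hnormsq : ‖∑ i, A i‖^2 ≤ (m:ℝ) * ∑ i, ‖A i‖^2 := by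
        calc ‖∑ i, A i‖^2 ≤ (∑ i, ‖A i‖)^2 := by
              have h1 := norm_sum_le Finset.univ A
              have h2 : (0:ℝ) ≤ ‖∑ i, A i‖ := norm_nonneg _
              nlinarith
          _ ≤ (m:ℝ) * ∑ i, ‖A i‖^2 := by
              simpa using sq_sum_le_card_mul_sum_sq
                (s := (Finset.univ : Finset (Fin m))) (f := fun i => ‖A i‖)
      have hS0 : (0:ℝ) ≤ ∑ i, ‖A i‖^2 := Finset.sum_nonneg fun i _ => sq_nonneg _
      have hkey1 : ‖δ - ((m:ℝ)⁻¹ * η) • ∑ i, A i‖ ≤ ‖δ‖ := by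
        set c : ℝ := (m:ℝ)⁻¹ * η with hc
        obtain ⟨SA, hSA⟩ : ∃ x, x = ∑ i, ‖A i‖^2 := ⟨_, rfl⟩
        obtain ⟨nA, hnA⟩ : ∃ x, x = ‖∑ i, A i‖ := ⟨_, rfl⟩
        obtain ⟨ip, hip⟩ : ∃ x, x = ⟪∑ i, A i, δ⟫ := ⟨_, rfl⟩
        have hsumco' : β⁻¹ * SA ≤ ip := by rw [hSA, hip]; exact hsumco
        have hnormsq' : nA^2 ≤ (m:ℝ) * SA := by rw [hnA, hSA]; exact hnormsq
        have hS0' : (0:ℝ) ≤ SA := by rw [hSA]; exact hS0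
        have hsq : ‖δ - c • ∑ i, A i‖^2 ≤ ‖δ‖^2 := by
          rw [@norm_sub_sq_real]
          have e1 : ⟪δ, c • ∑ i, A i⟫ = c * ip := by
            rw [hip, real_inner_smul_right, real_inner_comm]
          have e2 : ‖c • ∑ i, A i‖^2 = c^2 * nA^2 := by
            rw [hnA, norm_smul, mul_pow, Real.norm_eq_abs, sq_abs]
          rw [e1, e2]
          have hβi : η ≤ 2 * β⁻¹ := by
            rw [div_eq_mul_inv] at hηβ; linarith
          have h3 : c^2 * nA^2 ≤ c * η * SA := by
            have hcc : c^2 * ((m:ℝ) * SA) = c * η * SA := by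
              rw [hc]; field_simp
            nlinarith [sq_nonneg c, mul_le_mul_of_nonneg_left hnormsq' (sq_nonneg c)]
          have h4 : c * η * SA ≤ 2 * c * ip := by
            have h5 : c * η * SA ≤ c * (2 * β⁻¹) * SA := by
              nlinarith [mul_le_mul_of_nonneg_right hβi hS0', hc0]
            have h6 : c * (2 * β⁻¹) * SA ≤ 2 * c * ip := by
              nlinarith [mul_le_mul_of_nonneg_left hsumco' (by linarith [hc0] : (0:ℝ) ≤ 2 * c)]
            linarith
          linarith
        have := Real.sqrt_le_sqrt hsq
        rwa [Real.sqrt_sq (norm_nonneg _), Real.sqrt_sq (norm_nonneg _)] at this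
      -- error bound
      have hEbd : ∀ i : Fin m, ‖E i‖ ≤
          β * ‖w t i - wb t‖ + β * ‖v t i - vb t‖
            + ‖f' (S i (j t i)) (v t i) - Gv t i‖ := by
        intro i
        have hdecomp : E i = (Gw t i - f' (S i (j t i)) (wb t))
            - (f' (S i (j t i)) (v t i) - f' (S i (j t i)) (vb t))
            + (f' (S i (j t i)) (v t i) - Gv t i) := by
          simp only [hE, hA]
          abel
        rw [hdecomp]
        calc ‖_ - _ + _‖ ≤ ‖Gw t i - f' (S i (j t i)) (wb t)‖
              + ‖f' (S i (j t i)) (v t i) - f' (S i (j t i)) (vb t)‖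
              + ‖f' (S i (j t i)) (v t i) - Gv t i‖ := by
              refine le_trans (norm_add_le _ _) ?_
              gcongr
              exact norm_sub_le _ _
          _ ≤ _ := by
              gcongr
              · exact hsmooth _ _ _
              · exact hsmooth _ _ _
      have hD : ∑ i, ‖f' (S i (j t i)) (v t i) - Gv t i‖ ≤ 2 * L * ind t := by
        by_cases hjk : j t r = k
        · have hiv : ind t = 1 := if_pos hjk
          rw [hiv, mul_one]
          calc ∑ i, ‖f' (S i (j t i)) (v t i) - Gv t i‖
              ≤ ∑ i : Fin m, (if i = r then 2 * L else 0) := by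
                refine Finset.sum_le_sum fun i _ => ?_
                by_cases hir : i = r
                · subst hir
                  have h1 := hgradbd (S i (j t i)) (v t i)
                  have h2 := hgradbd (S' i (j t i)) (v t i)
                  simp only [hGv, eq_self_iff_true, if_true]
                  refine le_trans (norm_sub_le _ _) (by linarith)
                · have hne : (i, j t i) ≠ (r, k) := by
                    intro hcon
                    exact hir (congrArg Prod.fst hcon)
                  have := hSS' i (j t i) hne
                  simp only [hGv, this, sub_self, norm_zero, if_neg hir]
                  exact le_refl 0
            _ = 2 * L := by simp
        · have hiv : ind t = 0 := if_neg hjk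
          rw [hiv, mul_zero]
          have hz : ∀ i : Fin m, f' (S i (j t i)) (v t i) - Gv t i = 0 := by
            intro i
            have hne : (i, j t i) ≠ (r, k) := by
              intro hcon
              apply hjk
              have h1 : i = r := congrArg Prod.fst hcon
              have h2 : j t i = k := congrArg Prod.snd hcon
              rw [← h1]; exact h2
            have := hSS' i (j t i) hne
            simp only [hGv, this, sub_self]
          simp [hz]
      have hconsWt := hconsW t ht1 (by omega)
      have hconsVt := hconsV t ht1 (by omega)
      have hEsum : ∑ i, ‖E i‖ ≤ 4 * η * L * β * m / (1 - lam) + 2 * L * ind t := by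
        calc ∑ i, ‖E i‖ ≤ ∑ i, (β * ‖w t i - wb t‖ + β * ‖v t i - vb t‖
              + ‖f' (S i (j t i)) (v t i) - Gv t i‖) :=
              Finset.sum_le_sum fun i _ => hEbd i
          _ = β * (∑ i, ‖w t i - wb t‖) + β * (∑ i, ‖v t i - vb t‖)
              + ∑ i, ‖f' (S i (j t i)) (v t i) - Gv t i‖ := by
              rw [Finset.sum_add_distrib, Finset.sum_add_distrib, Finset.mul_sum, Finset.mul_sum]
          _ ≤ β * (2 * η * L * m / (1 - lam)) + β * (2 * η * L * m / (1 - lam))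
              + 2 * L * ind t := by
              refine add_le_add (add_le_add ?_ ?_) hD
              · exact mul_le_mul_of_nonneg_left hconsWt hβ.le
              · exact mul_le_mul_of_nonneg_left hconsVt hβ.le
          _ = 4 * η * L * β * m / (1 - lam) + 2 * L * ind t := by ring
      -- assemble the step
      have hstepbd : ‖wb (t+1) - vb (t+1)‖ ≤ ‖δ‖ + bnd t := by
        rw [hstep]
        calc ‖(δ - ((m:ℝ)⁻¹ * η) • ∑ i, A i) - ((m:ℝ)⁻¹ * η) • ∑ i, E i‖
            ≤ ‖δ - ((m:ℝ)⁻¹ * η) • ∑ i, A i‖ + ‖((m:ℝ)⁻¹ * η) • ∑ i, E i‖ :=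
              norm_sub_le _ _
          _ ≤ ‖δ‖ + ((m:ℝ)⁻¹ * η) * ∑ i, ‖E i‖ := by
              refine add_le_add hkey1 ?_
              rw [norm_smul, Real.norm_eq_abs, abs_of_pos hc0]
              exact mul_le_mul_of_nonneg_left (norm_sum_le _ _) hc0.le
          _ ≤ ‖δ‖ + ((m:ℝ)⁻¹ * η) * (4 * η * L * β * m / (1 - lam) + 2 * L * ind t) := by
              exact add_le_add (le_refl _) (mul_le_mul_of_nonneg_left hEsum hc0.le)
          _ = ‖δ‖ + bnd t := by
              simp only [hbnd]
              field_simp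
      -- sum identity
      have hindge : 0 ≤ ind t := by simp only [hind]; positivity
      have hIcc : ∑ s ∈ Finset.Icc 1 ((t+1)-1), bnd s
          = (∑ s ∈ Finset.Icc 1 (t-1), bnd s) + bnd t := by
        obtain ⟨t', rfl⟩ : ∃ t', t = t' + 1 := ⟨t - 1, by omega⟩
        simp only [Nat.add_sub_cancel]
        exact Finset.sum_Icc_succ_top (by omega) _
      rw [hIcc]
      calc ‖wb (t+1) - vb (t+1)‖ ≤ ‖δ‖ + bnd t := hstepbd
        _ ≤ (∑ s ∈ Finset.Icc 1 (t-1), bnd s) + bnd t :=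
            add_le_add ihv (le_refl _)
  -- final assembly
  have hT1 := hmain (T+1) (by omega) (le_refl _)
  simp only [Nat.add_sub_cancel] at hT1
  have hsumb : ∑ s ∈ Finset.Icc 1 T, bnd s
      = 4*η^2*β*L/(1-lam) * T + 2*η*L/m * ∑ s ∈ Finset.Icc 1 T, ind s := by
    simp only [hbnd]
    rw [Finset.sum_add_distrib, Finset.sum_const, Nat.card_Icc, ← Finset.mul_sum]
    simp only [Nat.add_sub_cancel, nsmul_eq_mul]
    ring
  have hlipz := hlip z (wb (T+1)) (vb (T+1))
  calc |f z ((m : ℝ)⁻¹ • ∑ i, w (T + 1) i) - f z ((m : ℝ)⁻¹ • ∑ i, v (T + 1) i)|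
      = |f z (wb (T+1)) - f z (vb (T+1))| := rfl
    _ ≤ L * ‖wb (T+1) - vb (T+1)‖ := hlipz
    _ ≤ L * (4*η^2*β*L/(1-lam) * T + 2*η*L/m * ∑ s ∈ Finset.Icc 1 T, ind s) := by
        rw [← hsumb]
        exact mul_le_mul_of_nonneg_left hT1 hL.le
    _ = 4 * η ^ 2 * β * L ^ 2 * T / (1 - lam)
          + 2 * η * L ^ 2 / m * ∑ t ∈ Finset.Icc 1 T, ind t := by
        field_simp
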